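/- arXiv:1602.07632 — 8 statements merged into one kernel-verified Lean document; each statement's English description precedes it below -/
import Mathlib

section
/- Let C be a category with a zero object and let X be a commutative square in C, given by morphisms f : x ⟶ y, g : x ⟶ x', f' : x' ⟶ y', g' : y ⟶ y' with g' ∘ f = f' ∘ g, such that the kernels of f, f', g, g' exist. If the square X is a pullback square, then both partial kernel maps F₁X : ker f ⟶ ker f' and F₂X : ker g ⟶ ker g' are isomorphisms. -/
open CategoryTheory CategoryTheory.Limits

/-- If a commutative square in a category with a zero object is a pullback square, then both
partial kernel maps `ker f ⟶ ker f'` and `ker g ⟶ ker g'` are isomorphisms. -/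
theorem partial_kernels_of_pullback_iso {C : Type*} [Category C]
    [HasZeroObject C] [HasZeroMorphisms C]
    {x y x' y' : C} (f : x ⟶ y) (g : x ⟶ x') (f' : x' ⟶ y') (g' : y ⟶ y')
    (w : f ≫ g' = g ≫ f')
    [HasKernel f] [HasKernel f'] [HasKernel g] [HasKernel g']
    (hX : IsPullback g f f' g') :
    IsIso (kernel.map f f' g g' w) ∧ IsIso (kernel.map g g' f f' w.symm) := by
  constructor
  · -- inverse of kernel.map f f'
    have h : kernel.ι f' ≫ f' = (0 : kernel f' ⟶ y) ≫ g' := by simp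
    set l := hX.lift (kernel.ι f') 0 h with hl
    have hlg : l ≫ g = kernel.ι f' := hX.lift_fst _ _ _
    have hlf : l ≫ f = 0 := hX.lift_snd _ _ _
    refine ⟨kernel.lift f l hlf, ?_, ?_⟩
    · apply (cancel_mono (kernel.ι f)).1
      apply hX.hom_ext
      · simp [hlg]
      · simp [hlf]
    · apply (cancel_mono (kernel.ι f')).1
      simp [hlg]
  · have h : (0 : kernel g' ⟶ x') ≫ f' = kernel.ι g' ≫ g' := by simp
    set m := hX.lift 0 (kernel.ι g') h with hm
    have hmg : m ≫ g = 0 := hX.lift_fst _ _ _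
    have hmf : m ≫ f = kernel.ι g' := hX.lift_snd _ _ _
    refine ⟨kernel.lift g m hmg, ?_, ?_⟩
    · apply (cancel_mono (kernel.ι g)).1
      apply hX.hom_ext
      · simp [hmg]
      · simp [hmf]
    · apply (cancel_mono (kernel.ι g')).1
      simp [hmf]
end

section
/- Let C be a category with a zero object and let X be a commutative square in C, given by morphisms f : x ⟶ y, g : x ⟶ x', f' : x' ⟶ y', g' : y ⟶ y' with g' ∘ f = f' ∘ g. Assume the pushout p of the span (g, f) exists and all relevant cokernels exist. Then the total cofiber is isomorphic to both iterated cokernels: tcof X = coker(can : p ⟶ y') ≅ coker(C₁X : coker f ⟶ coker f') ≅ coker(C₂X : coker g ⟶ coker g'). -/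
open CategoryTheory CategoryTheory.Limits

section Aux

variable {C : Type*} [Category C] [HasZeroObject C] [HasZeroMorphisms C]
    {x y x' y' : C} (f : x ⟶ y) (g : x ⟶ x') (f' : x' ⟶ y') (g' : y ⟶ y')
    (w : g ≫ f' = f ≫ g')
    [HasPushout g f] [HasCokernel (pushout.desc f' g' w)]
    [HasCokernel f] [HasCokernel f']
    [HasCokernel (cokernel.map f f' g g' w.symm)]

lemma aux1 : pushout.desc f' g' w ≫
    (cokernel.π f' ≫ cokernel.π (cokernel.map f f' g g' w.symm)) = 0 := by
  have key : cokernel.π f ≫ cokernel.map f f' g g' w.symm = g' ≫ cokernel.π f' := by simp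
  apply pushout.hom_ext
  · rw [← Category.assoc, ← Category.assoc, pushout.inl_desc, cokernel.condition,
      zero_comp, comp_zero]
  · rw [← Category.assoc, ← Category.assoc, pushout.inr_desc, ← key, Category.assoc,
      cokernel.condition, comp_zero, comp_zero]

lemma aux2 : f' ≫ cokernel.π (pushout.desc f' g' w) = 0 := by
  have h : f' ≫ cokernel.π (pushout.desc f' g' w) =
      (pushout.inl g f ≫ pushout.desc f' g' w) ≫ cokernel.π (pushout.desc f' g' w) := by
    rw [pushout.inl_desc]
  rw [h, Category.assoc, cokernel.condition, comp_zero]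

lemma aux3 : cokernel.map f f' g g' w.symm ≫ cokernel.desc f' (cokernel.π (pushout.desc f' g' w))
    (aux2 f g f' g' w) = 0 := by
  have key : cokernel.π f ≫ cokernel.map f f' g g' w.symm = g' ≫ cokernel.π f' := by simp
  have h : g' ≫ cokernel.π (pushout.desc f' g' w) =
      (pushout.inr g f ≫ pushout.desc f' g' w) ≫ cokernel.π (pushout.desc f' g' w) := by
    rw [pushout.inr_desc]
  apply coequalizer.hom_ext
  show cokernel.π f ≫ _ = cokernel.π f ≫ _
  rw [← Category.assoc, key, Category.assoc, cokernel.π_desc, comp_zero, h,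
    Category.assoc, cokernel.condition, comp_zero]

/-- The general iso; applied twice using pushout symmetry. -/
noncomputable def tcofIso : cokernel (pushout.desc f' g' w) ≅
    cokernel (cokernel.map f f' g g' w.symm) where
  hom := cokernel.desc _ (cokernel.π f' ≫ cokernel.π _) (aux1 f g f' g' w)
  inv := cokernel.desc _ (cokernel.desc f' (cokernel.π _) (aux2 f g f' g' w))
    (aux3 f g f' g' w)
  hom_inv_id := by
    apply coequalizer.hom_ext
    simp
  inv_hom_id := by
    apply coequalizer.hom_ext
    simp only [← Category.assoc, cokernel.π_desc, Category.comp_id]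
    apply coequalizer.hom_ext
    simp only [← Category.assoc, cokernel.π_desc]

end Aux

/-- For any commutative square in a category with a zero object, the total cofiber (the
cokernel of the canonical map from the pushout of the span to the final vertex) is
isomorphic to both iterated cokernels. -/
theorem tcof_iso_iterated_cokernels {C : Type*} [Category C]
    [HasZeroObject C] [HasZeroMorphisms C]
    {x y x' y' : C} (f : x ⟶ y) (g : x ⟶ x') (f' : x' ⟶ y') (g' : y ⟶ y')
    (w : g ≫ f' = f ≫ g')
    [HasPushout g f] [HasCokernel (pushout.desc f' g' w)]
    [HasCokernel f] [HasCokernel f'] [HasCokernel g] [HasCokernel g']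
    [HasCokernel (cokernel.map f f' g g' w.symm)]
    [HasCokernel (cokernel.map g g' f f' w)] :
    Nonempty (cokernel (pushout.desc f' g' w) ≅
      cokernel (cokernel.map f f' g g' w.symm)) ∧
    Nonempty (cokernel (pushout.desc f' g' w) ≅
      cokernel (cokernel.map g g' f f' w)) := by
  refine ⟨⟨tcofIso f g f' g' w⟩, ?_⟩
  have : HasPushout f g := ⟨⟨⟨_, (PushoutCocone.flipIsColimit (pushout.isColimit g f))⟩⟩⟩
  let e : pushout f g ≅ pushout g f :=
    (colimit.isoColimitCocone ⟨_, (PushoutCocone.flipIsColimit (pushout.isColimit g f))⟩)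
  have hl : pushout.inl f g ≫ e.hom = pushout.inr g f := by
    simp [e, colimit.isoColimitCocone]
    exact IsColimit.comp_coconePointUniqueUpToIso_hom _ _ WalkingSpan.left
  have hr : pushout.inr f g ≫ e.hom = pushout.inl g f := by
    simp [e, colimit.isoColimitCocone]
    exact IsColimit.comp_coconePointUniqueUpToIso_hom _ _ WalkingSpan.right
  have he : e.hom ≫ pushout.desc f' g' w = pushout.desc g' f' w.symm := by
    apply pushout.hom_ext
    · rw [← Category.assoc, hl, pushout.inr_desc, pushout.inl_desc]
    · rw [← Category.assoc, hr, pushout.inl_desc, pushout.inr_desc]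
  have : Epi e.hom := inferInstance
  have h1 : HasCokernel (e.hom ≫ pushout.desc f' g' w) := by
    exact hasCokernel_epi_comp _ _
  have h2 : HasCokernel (pushout.desc g' f' w.symm) := by rwa [he] at h1
  let e2 : cokernel (pushout.desc f' g' w) ≅ cokernel (pushout.desc g' f' w.symm) :=
    (cokernelEpiComp e.hom _).symm ≪≫ cokernelIsoOfEq he
  exact ⟨e2 ≪≫ tcofIso g f g' f' w.symm⟩
end

section
/- Let C be a category with a zero object and let X be a commutative square in C, given by morphisms f : x ⟶ y, g : x ⟶ x', f' : x' ⟶ y', g' : y ⟶ y' with g' ∘ f = f' ∘ g. Assume the pullback q of the cospan (f', g') exists and all relevant kernels exist. Then the total fiber is isomorphic to both iterated kernels: tfib X = ker(can' : x ⟶ q) ≅ ker(F₁X : ker f ⟶ ker f') ≅ ker(F₂X : ker g ⟶ ker g'). -/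
open CategoryTheory CategoryTheory.Limits

/-- For any commutative square in a category with a zero object, the total fiber (the
kernel of the canonical map from the initial vertex to the pullback of the cospan) is
isomorphic to both iterated kernels. -/
theorem tfib_iso_iterated_kernels {C : Type*} [Category C]
    [HasZeroObject C] [HasZeroMorphisms C]
    {x y x' y' : C} (f : x ⟶ y) (g : x ⟶ x') (f' : x' ⟶ y') (g' : y ⟶ y')
    (w : g ≫ f' = f ≫ g')
    [HasPullback f' g'] [HasKernel (pullback.lift g f w)]
    [HasKernel f] [HasKernel f'] [HasKernel g] [HasKernel g']
    [HasKernel (kernel.map f f' g g' w.symm)]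
    [HasKernel (kernel.map g g' f f' w)] :
    Nonempty (kernel (pullback.lift g f w) ≅
      kernel (kernel.map f f' g g' w.symm)) ∧
    Nonempty (kernel (pullback.lift g f w) ≅
      kernel (kernel.map g g' f f' w)) := by
  set can := pullback.lift g f w with hcan
  have hcf : kernel.ι can ≫ f = 0 := by
    rw [← pullback.lift_snd g f w, ← Category.assoc, ← hcan, kernel.condition, zero_comp]
  have hcg : kernel.ι can ≫ g = 0 := by
    rw [← pullback.lift_fst g f w, ← Category.assoc, ← hcan, kernel.condition, zero_comp]
  constructor
  · set m := kernel.map f f' g g' w.symm with hm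
    have hmι : m ≫ kernel.ι f' = kernel.ι f ≫ g := by simp [hm]
    set a : kernel can ⟶ kernel f := kernel.lift f (kernel.ι can) hcf with ha
    have ham : a ≫ m = 0 := by
      rw [← cancel_mono (kernel.ι f')]
      simp [hmι, ha, reassoc_of% hcg, hcg]
    set φ : kernel can ⟶ kernel m := kernel.lift m a ham with hφ
    have hbc : (kernel.ι m ≫ kernel.ι f) ≫ can = 0 := by
      apply pullback.hom_ext
      · simp [hcan]
        rw [pullback.lift_fst]
        rw [← hmι, ← Category.assoc, kernel.condition, zero_comp]
      · simp [hcan]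
        rw [pullback.lift_snd]
        simp
    set ψ : kernel m ⟶ kernel can := kernel.lift can (kernel.ι m ≫ kernel.ι f) hbc with hψ
    refine ⟨⟨φ, ψ, ?_, ?_⟩⟩
    · rw [← cancel_mono (kernel.ι can)]
      simp [hφ, hψ, ha]
    · rw [← cancel_mono (kernel.ι m), ← cancel_mono (kernel.ι f)]
      simp [hφ, hψ, ha]
  · set m := kernel.map g g' f f' w with hm
    have hmι : m ≫ kernel.ι g' = kernel.ι g ≫ f := by simp [hm]
    set a : kernel can ⟶ kernel g := kernel.lift g (kernel.ι can) hcg with ha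
    have ham : a ≫ m = 0 := by
      rw [← cancel_mono (kernel.ι g')]
      simp [hmι, ha, reassoc_of% hcf, hcf]
    set φ : kernel can ⟶ kernel m := kernel.lift m a ham with hφ
    have hbc : (kernel.ι m ≫ kernel.ι g) ≫ can = 0 := by
      apply pullback.hom_ext
      · simp [hcan]
        rw [pullback.lift_fst]
        simp
      · simp [hcan]
        rw [pullback.lift_snd]
        rw [← hmι, ← Category.assoc, kernel.condition, zero_comp]
    set ψ : kernel m ⟶ kernel can := kernel.lift can (kernel.ι m ≫ kernel.ι g) hbc with hψ
    refine ⟨⟨φ, ψ, ?_, ?_⟩⟩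
    · rw [← cancel_mono (kernel.ι can)]
      simp [hφ, hψ, ha]
    · rw [← cancel_mono (kernel.ι m), ← cancel_mono (kernel.ι g)]
      simp [hφ, hψ, ha]
end

section
/- Let C be a category with a zero object and let X be a commutative square in C, given by morphisms f : x ⟶ y, g : x ⟶ x', f' : x' ⟶ y', g' : y ⟶ y' with g' ∘ f = f' ∘ g. Assume the pushout p of the span (g, f) exists and all relevant cokernels exist. Let u : coker f' ⟶ tcof X and v : coker g' ⟶ tcof X be the unique morphisms with u ∘ π_{f'} = π_{can} and v ∘ π_{g'} = π_{can}, where π_{can} : y' ⟶ tcof X is the cokernel projection of can : p ⟶ y'. Then the square with vertices y', coker f', coker g', tcof X, edges π_{f'} : y' ⟶ coker f', π_{g'} : y' ⟶ coker g', u and v, is a pushout square; in other words, tcof X is the pushout of the span coker f' ⟵(π_{f'})— y' —(π_{g'})⟶ coker g'. -/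
open CategoryTheory CategoryTheory.Limits

/-- The total cofiber of a commutative square is the pushout of the span
`coker f' ⟵ y' ⟶ coker g'` formed by the two cokernel projections. -/
theorem tcof_isPushout_of_cokernel_projections {C : Type*} [Category C]
    [HasZeroObject C] [HasZeroMorphisms C]
    {x y x' y' : C} (f : x ⟶ y) (g : x ⟶ x') (f' : x' ⟶ y') (g' : y ⟶ y')
    (w : g ≫ f' = f ≫ g')
    [HasPushout g f] [HasCokernel (pushout.desc f' g' w)]
    [HasCokernel f'] [HasCokernel g'] :
    IsPushout (cokernel.π f') (cokernel.π g')
      (cokernel.desc f' (cokernel.π (pushout.desc f' g' w)) (by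
        have h2 : pushout.inl g f ≫ pushout.desc f' g' w ≫
            cokernel.π (pushout.desc f' g' w) = 0 := by
          rw [cokernel.condition, comp_zero]
        rwa [← Category.assoc, pushout.inl_desc] at h2))
      (cokernel.desc g' (cokernel.π (pushout.desc f' g' w)) (by
        have h2 : pushout.inr g f ≫ pushout.desc f' g' w ≫
            cokernel.π (pushout.desc f' g' w) = 0 := by
          rw [cokernel.condition, comp_zero]
        rwa [← Category.assoc, pushout.inr_desc] at h2)) := by
  refine IsPushout.of_isColimit' ⟨by simp⟩ ?_
  refine PushoutCocone.IsColimit.mk _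
    (fun s => cokernel.desc _ (cokernel.π f' ≫ s.inl) ?_)
    (fun s => ?_) (fun s => ?_) (fun s m h1 h2 => ?_)
  · apply pushout.hom_ext
    · rw [← Category.assoc, ← Category.assoc, pushout.inl_desc,
        Category.assoc, ← Category.assoc, cokernel.condition, zero_comp, comp_zero]
    · rw [← Category.assoc, ← Category.assoc, pushout.inr_desc, comp_zero,
        Category.assoc, s.condition, ← Category.assoc, cokernel.condition, zero_comp]
  · apply coequalizer.hom_ext
    simp
  · apply coequalizer.hom_ext
    simp [s.condition]
  · apply coequalizer.hom_ext
    simp only [cokernel.π_desc]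
    show cokernel.π (pushout.desc f' g' w) ≫ m = cokernel.π f' ≫ s.inl
    rw [show (cokernel.π (pushout.desc f' g' w) : y' ⟶ _)
        = cokernel.π f' ≫ cokernel.desc f' (cokernel.π (pushout.desc f' g' w))
          (by
            have h2 : pushout.inl g f ≫ pushout.desc f' g' w ≫
                cokernel.π (pushout.desc f' g' w) = 0 := by
              rw [cokernel.condition, comp_zero]
            rwa [← Category.assoc, pushout.inl_desc] at h2)
        from by simp, Category.assoc, h1]
end

section
/- Let C be a category with a zero object, kernels, and cokernels. Then there is an adjoint 7-tuple of functors between C and Arrow C: coker ⊣ L ⊣ T ⊣ Δ ⊣ S ⊣ R ⊣ ker, where coker, ker : Arrow C ⟶ C send an arrow to its cokernel, resp. kernel; L, R : C ⟶ Arrow C send x to the arrow 0 ⟶ x, resp. x ⟶ 0; T, S : Arrow C ⟶ C are the target and source functors; and Δ : C ⟶ Arrow C sends x to 𝟙_x. -/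
open CategoryTheory CategoryTheory.Limits ZeroObject

variable (C : Type*) [Category C] [HasZeroObject C] [HasZeroMorphisms C]
  [HasKernels C] [HasCokernels C]

/-- The cokernel functor `Arrow C ⥤ C`. -/
noncomputable def cokernelFunctor : Arrow C ⥤ C where
  obj f := cokernel f.hom
  map {f g} sq := cokernel.map f.hom g.hom sq.left sq.right sq.w.symm
  map_id f := by
    apply coequalizer.hom_ext
    simp
  map_comp sq sq' := by
    apply coequalizer.hom_ext
    simp

/-- The kernel functor `Arrow C ⥤ C`. -/
noncomputable def kernelFunctor : Arrow C ⥤ C where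
  obj f := kernel f.hom
  map {f g} sq := kernel.map f.hom g.hom sq.left sq.right sq.w.symm
  map_id f := by
    apply equalizer.hom_ext
    simp
  map_comp sq sq' := by
    apply equalizer.hom_ext
    simp

/-- The functor `C ⥤ Arrow C` sending an object `x` to the arrow `0 ⟶ x`. -/
noncomputable def fromZeroFunctor : C ⥤ Arrow C where
  obj x := Arrow.mk (0 : (0 : C) ⟶ x)
  map u := Arrow.homMk (u := 𝟙 (0 : C)) (v := u) (by simp)

/-- The functor `C ⥤ Arrow C` sending an object `x` to the arrow `x ⟶ 0`. -/
noncomputable def toZeroFunctor : C ⥤ Arrow C where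
  obj x := Arrow.mk (0 : x ⟶ (0 : C))
  map u := Arrow.homMk (u := u) (v := 𝟙 (0 : C)) (by simp)

/-- The constant-arrow (diagonal) functor `C ⥤ Arrow C` sending `x` to `𝟙 x`. -/
def diagArrowFunctor : C ⥤ Arrow C where
  obj x := Arrow.mk (𝟙 x)
  map u := Arrow.homMk (u := u) (v := u) (by simp)

section Adjs
variable {C}

noncomputable def adj1 : cokernelFunctor C ⊣ fromZeroFunctor C :=
  Adjunction.mkOfHomEquiv
    { homEquiv := fun f x =>
        { toFun := fun φ => Arrow.homMk (u := 0) (v := cokernel.π f.hom ≫ φ) (by exact zero_comp.trans (zero_comp.symm.trans (cokernel.condition_assoc f.hom φ).symm))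
          invFun := fun ψ => cokernel.desc f.hom ψ.right
            (ψ.w.symm.trans (by simp [fromZeroFunctor]))
          left_inv := fun φ => by apply coequalizer.hom_ext; exact cokernel.π_desc _ _ _
          right_inv := fun ψ => by
            ext
            · exact (isZero_zero C).eq_of_tgt _ _
            · exact cokernel.π_desc _ _ _ }
      homEquiv_naturality_left_symm := fun sq φ => by
        apply coequalizer.hom_ext
        erw [cokernel.π_desc, ← Category.assoc, cokernel.π_desc, Category.assoc, cokernel.π_desc]; rfl
      homEquiv_naturality_right := fun φ u => by
        ext
        · exact (isZero_zero C).eq_of_tgt _ _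
        · exact (Category.assoc _ _ _).symm }

noncomputable def adj2 : fromZeroFunctor C ⊣ Arrow.rightFunc :=
  Adjunction.mkOfHomEquiv
    { homEquiv := fun x g =>
        { toFun := fun ψ => ψ.right
          invFun := fun v => Arrow.homMk (u := 0) (v := v) (by exact zero_comp.trans zero_comp.symm)
          left_inv := fun ψ => by
            ext
            · exact (isZero_zero C).eq_of_src _ _
            · rfl
          right_inv := fun v => rfl }
      homEquiv_naturality_left_symm := fun u ψ => by
        ext
        · exact (isZero_zero C).eq_of_src _ _
        · rfl
      homEquiv_naturality_right := fun ψ u => by rfl }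

def adj3 : Arrow.rightFunc ⊣ diagArrowFunctor C :=
  Adjunction.mkOfHomEquiv
    { homEquiv := fun f x =>
        { toFun := fun v => Arrow.homMk (u := f.hom ≫ v) (v := v) (by simp [diagArrowFunctor])
          invFun := fun ψ => ψ.right
          left_inv := fun v => rfl
          right_inv := fun ψ => by
            ext
            · exact ψ.w.symm.trans (by simp [diagArrowFunctor])
            · rfl }
      homEquiv_naturality_left_symm := fun sq v => by rfl
      homEquiv_naturality_right := fun v u => by
        ext
        · exact (Category.assoc _ _ _).symm
        · rfl }

def adj4 : diagArrowFunctor C ⊣ Arrow.leftFunc :=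
  Adjunction.mkOfHomEquiv
    { homEquiv := fun x g =>
        { toFun := fun ψ => ψ.left
          invFun := fun u => Arrow.homMk (u := u) (v := u ≫ g.hom) (by exact (Category.id_comp _).symm)
          left_inv := fun ψ => by
            ext
            · rfl
            · exact ψ.w.trans (by simp [diagArrowFunctor])
          right_inv := fun u => rfl }
      homEquiv_naturality_left_symm := fun u ψ => by
        ext
        · rfl
        · exact Category.assoc _ _ _
      homEquiv_naturality_right := fun ψ u => by rfl }

noncomputable def adj5 : Arrow.leftFunc ⊣ toZeroFunctor C :=
  Adjunction.mkOfHomEquiv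
    { homEquiv := fun f x =>
        { toFun := fun u => Arrow.homMk (u := u) (v := 0) (by exact comp_zero.trans comp_zero.symm)
          invFun := fun ψ => ψ.left
          left_inv := fun u => rfl
          right_inv := fun ψ => by
            ext
            · rfl
            · exact (isZero_zero C).eq_of_tgt _ _ }
      homEquiv_naturality_left_symm := fun sq u => by rfl
      homEquiv_naturality_right := fun u v => by
        ext
        · rfl
        · exact (isZero_zero C).eq_of_tgt _ _ }

noncomputable def adj6 : toZeroFunctor C ⊣ kernelFunctor C :=
  Adjunction.mkOfHomEquiv
    { homEquiv := fun x g =>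
        { toFun := fun ψ => kernel.lift g.hom ψ.left
            (ψ.w.trans (by simp [toZeroFunctor]))
          invFun := fun k => Arrow.homMk (u := k ≫ kernel.ι g.hom) (v := 0)
            (by exact ((Category.assoc _ _ _).trans ((congrArg _ (kernel.condition g.hom)).trans comp_zero)).trans zero_comp.symm)
          left_inv := fun ψ => by
            ext
            · exact kernel.lift_ι _ _ _
            · exact (isZero_zero C).eq_of_src _ _
          right_inv := fun k => by apply equalizer.hom_ext; exact kernel.lift_ι _ _ _ }
      homEquiv_naturality_left_symm := fun u ψ => by
        ext
        · exact Category.assoc _ _ _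
        · exact (isZero_zero C).eq_of_src _ _
      homEquiv_naturality_right := fun ψ sq => by
        apply equalizer.hom_ext
        erw [kernel.lift_ι, Category.assoc, kernel.lift_ι, ← Category.assoc, kernel.lift_ι]; rfl }

end Adjs

/-- In a category with a zero object, kernels and cokernels, there is an adjoint 7-tuple
`coker ⊣ L ⊣ T ⊣ Δ ⊣ S ⊣ R ⊣ ker` between `Arrow C` and `C`, where `L x = (0 ⟶ x)`,
`T` is the target functor, `Δ x = 𝟙 x`, `S` is the source functor, and `R x = (x ⟶ 0)`. -/
theorem adjoint_seven_tuple :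
    Nonempty (cokernelFunctor C ⊣ fromZeroFunctor C) ∧
    Nonempty (fromZeroFunctor C ⊣ Arrow.rightFunc) ∧
    Nonempty (Arrow.rightFunc ⊣ diagArrowFunctor C) ∧
    Nonempty (diagArrowFunctor C ⊣ Arrow.leftFunc) ∧
    Nonempty (Arrow.leftFunc ⊣ toZeroFunctor C) ∧
    Nonempty (toZeroFunctor C ⊣ kernelFunctor C) := by
  exact ⟨⟨adj1⟩, ⟨adj2⟩, ⟨adj3⟩, ⟨adj4⟩, ⟨adj5⟩, ⟨adj6⟩⟩
end

section
/- Let C be a category with an initial object ⊥ and a terminal object ⊤. If the functor L : C ⟶ Arrow C, sending x to the unique arrow ⊥ ⟶ x, admits a left adjoint, then C has a zero object (i.e., the initial object ⊥ is also terminal). -/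
open CategoryTheory CategoryTheory.Limits

variable (C : Type*) [Category C] [HasInitial C] [HasTerminal C]

/-- The identity on the terminal object is terminal in the arrow category. -/
noncomputable def arrowIdTerminal : IsTerminal (Arrow.mk (𝟙 (⊤_ C))) :=
  IsTerminal.ofUniqueHom
    (fun f => Arrow.homMk (u := terminal.from _) (v := terminal.from _)
      (by apply terminal.hom_ext))
    (fun f m => by
      ext
      · apply terminal.hom_ext
      · apply terminal.hom_ext)

/-- The functor `C ⥤ Arrow C` sending `x` to the unique arrow `⊥ ⟶ x`. -/
noncomputable def fromInitialFunctor : C ⥤ Arrow C where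
  obj x := Arrow.mk (initial.to x)
  map u := Arrow.homMk (u := 𝟙 (⊥_ C)) (v := u) (by simp)

/-- If the functor `x ↦ (⊥ ⟶ x) : C ⥤ Arrow C` admits a left adjoint, then the initial
object of `C` is also terminal, i.e. `C` has a zero object. -/
theorem hasZero_of_fromInitial_isRightAdjoint
    [(fromInitialFunctor C).IsRightAdjoint] :
    Nonempty (IsTerminal (⊥_ C)) := by
  -- As a right adjoint, `fromInitialFunctor C` preserves the terminal object.
  have hT : IsTerminal ((fromInitialFunctor C).obj (⊤_ C)) :=
    terminalIsTerminal.isTerminalObj (fromInitialFunctor C) (⊤_ C)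
  -- So `Arrow.mk (initial.to (⊤_ C))` is terminal in `Arrow C`.
  refine ⟨IsTerminal.ofUniqueHom (fun X => (hT.from (Arrow.mk (𝟙 X))).left) ?_⟩
  intro X m
  have h := hT.hom_ext (Arrow.homMk (u := m) (v := terminal.from X)
    (by apply terminal.hom_ext)) (hT.from (Arrow.mk (𝟙 X)))
  exact congrArg CommaMorphism.left h
end

section
/- Let C be a category with an initial object ⊥ and a terminal object ⊤. If the functor R : C ⟶ Arrow C, sending x to the unique arrow x ⟶ ⊤, admits a right adjoint, then C has a zero object (i.e., the terminal object ⊤ is also initial). -/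
open CategoryTheory CategoryTheory.Limits

variable (C : Type*) [Category C] [HasInitial C] [HasTerminal C]

/-- The functor `C ⥤ Arrow C` sending `x` to the unique arrow `x ⟶ ⊤`. -/
noncomputable def toTerminalFunctor : C ⥤ Arrow C where
  obj x := Arrow.mk (terminal.from x)
  map u := Arrow.homMk (u := u) (v := 𝟙 (⊤_ C)) (by simp)

/-- If the functor `x ↦ (x ⟶ ⊤) : C ⥤ Arrow C` admits a right adjoint, then the terminal
object of `C` is also initial, i.e. `C` has a zero object. -/
theorem hasZero_of_toTerminal_isLeftAdjoint
    [(toTerminalFunctor C).IsLeftAdjoint] :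
    Nonempty (IsInitial (⊤_ C)) := by
  let adj := Adjunction.ofIsLeftAdjoint (toTerminalFunctor C)
  -- for a map `m : ⊤ ⟶ y`, the square `(⊥ → ⊤) ⟶ 𝟙 y`
  let sq : ∀ {y : C}, (⊤_ C ⟶ y) →
      ((toTerminalFunctor C).obj (⊥_ C) ⟶ Arrow.mk (𝟙 y)) :=
    fun {y} m => Arrow.homMk (u := terminal.from (⊥_ C) ≫ m) (v := m) (by simp [toTerminalFunctor])
  refine ⟨IsInitial.ofUniqueHom
    (fun y => ((adj.homEquiv (⊥_ C) (Arrow.mk (𝟙 y))).symm (initial.to _)).right)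
    (fun y m => ?_)⟩
  have h1 : adj.homEquiv (⊥_ C) (Arrow.mk (𝟙 y)) (sq m) = initial.to _ :=
    initial.hom_ext _ _
  have h2 : sq m = (adj.homEquiv (⊥_ C) (Arrow.mk (𝟙 y))).symm (initial.to _) := by
    rw [← h1, Equiv.symm_apply_apply]
  exact congrArg CommaMorphism.right h2
end

section
/- Let C be a category with a zero object such that every pushout square in C is also a pullback square. Then every object of C is a zero object (equivalently, C is equivalent to the terminal category). -/
open CategoryTheory CategoryTheory.Limits ZeroObject

/-- If in a category with a zero object every pushout square is also a pullback square,
then every object is a zero object, i.e. the category is equivalent to the terminal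
category. -/
theorem all_isZero_of_pushouts_are_pullbacks {C : Type*} [Category C]
    [HasZeroObject C] [HasZeroMorphisms C]
    (h : ∀ {a b c d : C} (f : a ⟶ b) (g : a ⟶ c) (inl : b ⟶ d) (inr : c ⟶ d),
      IsPushout f g inl inr → IsPullback f g inl inr) :
    ∀ x : C, IsZero x := by
  intro x
  have hz := isZero_zero C
  have hp : IsPushout (0 : x ⟶ 0) (0 : x ⟶ 0) (0 : (0 : C) ⟶ 0) (0 : (0 : C) ⟶ 0) := by
    refine ⟨⟨by simp⟩, ⟨PushoutCocone.IsColimit.mk _ (fun s => s.inl) ?_ ?_ ?_⟩⟩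
    · intro s; exact hz.eq_of_src _ _
    · intro s; exact hz.eq_of_src _ _
    · intro s m _ _; exact hz.eq_of_src _ _
  have hpb := h _ _ _ _ hp
  rw [IsZero.iff_id_eq_zero]
  exact hpb.hom_ext (by simp) (by simp)
end
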